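/- Let G = G₁ ∪ G₂ be an essential reaction network. Then the following are equivalent: (D1) for every irreducible component Γ of G, the projection p₁(Γ) is a union of irreducible components of G₁; (D2) G₁ is essential. -/

import Mathlib

/-- A reaction `ν → ν'` is active on `x` iff `ν ≤ x` componentwise. -/
def Active {σ : Type*} (ν x : σ → ℕ) : Prop := ∀ i, ν i ≤ x i

/-- One jump of the CTMC: firing an active reaction `ν → ν'` moves `x` to `x + ν' - ν`. -/
def Step {σ : Type*} (R : Set ((σ → ℕ) × (σ → ℕ))) (x y : σ → ℕ) : Prop :=
  ∃ r ∈ R, Active r.1 x ∧ ∀ i, y i + r.1 i = x i + r.2 i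

/-- `u` is accessible from `x` via a finite sequence of active reactions. -/
def Accessible {σ : Type*} (R : Set ((σ → ℕ) × (σ → ℕ))) : (σ → ℕ) → (σ → ℕ) → Prop :=
  Relation.ReflTransGen (Step R)

/-- An irreducible component (closed communicating class): a nonempty `Γ` such that for
`x ∈ Γ`, `u` is accessible from `x` iff `u ∈ Γ`. -/
def IsIrreducibleComponent {σ : Type*} (R : Set ((σ → ℕ) × (σ → ℕ)))
    (Γ : Set (σ → ℕ)) : Prop :=
  Γ.Nonempty ∧ ∀ x ∈ Γ, ∀ u, Accessible R x u ↔ u ∈ Γ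

/-- A network is essential if the whole state space is a union of closed communicating
classes. -/
def Essential {σ : Type*} (R : Set ((σ → ℕ) × (σ → ℕ))) : Prop :=
  ∀ x : σ → ℕ, ∃ Γ, IsIrreducibleComponent R Γ ∧ x ∈ Γ

/-- Zero-padding embedding of a state on species `S` into the full species set. -/
def pad {ι : Type*} [DecidableEq ι] (S : Finset ι) (v : ↥S → ℕ) : ι → ℕ :=
  fun i => if h : i ∈ S then v ⟨i, h⟩ else 0

/-- Coordinate projection onto the species of `S`. -/
def proj {ι : Type*} (S : Finset ι) (x : ι → ℕ) : ↥S → ℕ := fun i => x ↑i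

/-- The reactions of a subnetwork on species `S`, embedded (by zero-padding) as reactions
on the full species set. -/
def padR {ι : Type*} [DecidableEq ι] (S : Finset ι) (R : Set ((↥S → ℕ) × (↥S → ℕ))) :
    Set ((ι → ℕ) × (ι → ℕ)) := (fun r => (pad S r.1, pad S r.2)) '' R

lemma proj_pad {ι : Type*} [DecidableEq ι] (S : Finset ι) (v : ↥S → ℕ) :
    proj S (pad S v) = v := by
  funext j
  simp [proj, pad, j.2]

/-- A step of the subnetwork lifts to a step of the full network. -/
lemma step_lift {ι : Type*} [DecidableEq ι] (S : Finset ι)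
    (R₁ : Set ((↥S → ℕ) × (↥S → ℕ))) (R : Set ((ι → ℕ) × (ι → ℕ)))
    (hR : padR S R₁ ⊆ R) (x : ι → ℕ) (u : ↥S → ℕ)
    (h : Step R₁ (proj S x) u) : ∃ x', Step R x x' ∧ proj S x' = u := by
  obtain ⟨r, hr, hact, heq⟩ := h
  have hactpad : Active (pad S r.1) x := by
    intro i
    by_cases hi : i ∈ S
    · simpa [pad, hi, proj] using hact ⟨i, hi⟩
    · simp [pad, hi]
  refine ⟨fun i => x i + pad S r.2 i - pad S r.1 i,
    ⟨(pad S r.1, pad S r.2), hR ⟨r, hr, rfl⟩, hactpad, ?_⟩, ?_⟩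
  · intro i
    have := hactpad i
    dsimp only at *
    omega
  · funext j
    have h1 := heq j
    have h2 := hact j
    simp only [proj, pad, j.2, dif_pos, Subtype.coe_eta, dite_true] at *
    omega

/-- Accessibility in the subnetwork lifts to accessibility in the full network. -/
lemma accessible_lift {ι : Type*} [DecidableEq ι] (S : Finset ι)
    (R₁ : Set ((↥S → ℕ) × (↥S → ℕ))) (R : Set ((ι → ℕ) × (ι → ℕ)))
    (hR : padR S R₁ ⊆ R) {y u : ↥S → ℕ} (h : Accessible R₁ y u) :
    ∀ x : ι → ℕ, proj S x = y → ∃ x', Accessible R x x' ∧ proj S x' = u := by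
  induction h using Relation.ReflTransGen.head_induction_on with
  | refl => exact fun x hx => ⟨x, Relation.ReflTransGen.refl, hx⟩
  | head hs _ ih =>
    intro x hx
    obtain ⟨x', hx', hpx'⟩ := step_lift S R₁ R hR x _ (hx ▸ hs)
    obtain ⟨x'', hx'', hpx''⟩ := ih x' hpx'
    exact ⟨x'', Relation.ReflTransGen.head hx' hx'', hpx''⟩

/-- for an essential union `G = G₁ ∪ G₂`, every irreducible component of `G`
projects to a union of irreducible components of `G₁` iff `G₁` is essential. -/
theorem stmt7 {ι : Type*} [Fintype ι] [DecidableEq ι] (S₁ S₂ : Finset ι)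
    (hcov : S₁ ∪ S₂ = Finset.univ)
    (R₁ : Set ((↥S₁ → ℕ) × (↥S₁ → ℕ))) (R₂ : Set ((↥S₂ → ℕ) × (↥S₂ → ℕ)))
    (hess : Essential (padR S₁ R₁ ∪ padR S₂ R₂)) :
    (∀ Γ : Set (ι → ℕ), IsIrreducibleComponent (padR S₁ R₁ ∪ padR S₂ R₂) Γ →
      ∃ 𝒞 : Set (Set (↥S₁ → ℕ)),
        (∀ C ∈ 𝒞, IsIrreducibleComponent R₁ C) ∧ ⋃₀ 𝒞 = proj S₁ '' Γ) ↔
    Essential R₁ := by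
  set R : Set ((ι → ℕ) × (ι → ℕ)) := padR S₁ R₁ ∪ padR S₂ R₂ with hRdef
  have hR : padR S₁ R₁ ⊆ R := Set.subset_union_left
  constructor
  · intro h y
    obtain ⟨Γ, hΓ, hxΓ⟩ := hess (pad S₁ y)
    obtain ⟨𝒞, h𝒞, hun⟩ := h Γ hΓ
    have hy : y ∈ ⋃₀ 𝒞 := by
      rw [hun]
      exact ⟨pad S₁ y, hxΓ, proj_pad S₁ y⟩
    obtain ⟨C, hC, hyC⟩ := hy
    exact ⟨C, h𝒞 C hC, hyC⟩
  · intro hess₁ Γ hΓ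
    refine ⟨{C | IsIrreducibleComponent R₁ C ∧ C ⊆ proj S₁ '' Γ}, fun C hC => hC.1, ?_⟩
    apply Set.Subset.antisymm
    · intro u ⟨C, hC, huC⟩
      exact hC.2 huC
    · rintro u ⟨x, hxΓ, rfl⟩
      obtain ⟨C, hC, hyC⟩ := hess₁ (proj S₁ x)
      refine ⟨C, ⟨hC, ?_⟩, hyC⟩
      intro v hvC
      have hacc : Accessible R₁ (proj S₁ x) v := (hC.2 _ hyC v).mpr hvC
      obtain ⟨x', hx', hpx'⟩ := accessible_lift S₁ R₁ R hR hacc x rfl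
      exact ⟨x', (hΓ.2 x hxΓ x').mp hx', hpx'⟩
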